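/- For θ > 0, the function f = f_{∞,θ} is a stationary solution of the nonlinear Fokker–Planck equation: Δf + div(v f (1 + f^γ)) = 0 on ℝ^d. -/

import Mathlib

open Real Set Finset

lemma aux_fderiv_f (d : ℕ) (γ θ : ℝ) (hγ : 0 < γ) (hθ : 0 < θ)
    (f : EuclideanSpace ℝ (Fin d) → ℝ)
    (hf : ∀ v, f v = (Real.exp (γ * (‖v‖ ^ 2 / 2 + θ)) - 1) ^ (-(1 / γ)))
    (v : EuclideanSpace ℝ (Fin d)) (i : Fin d) :
    fderiv ℝ f v (EuclideanSpace.single i (1 : ℝ)) = -(v i * f v * (1 + f v ^ γ)) := by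
  have hγne : γ ≠ 0 := ne_of_gt hγ
  set g : ℝ := γ * (‖v‖ ^ 2 / 2 + θ) with hg
  set E : ℝ := Real.exp g - 1 with hE
  have hEpos : 0 < E := by
    have : (1 : ℝ) < Real.exp g := by
      rw [← Real.exp_zero]
      exact Real.exp_lt_exp.2 (by positivity)
    linarith
  set D : ℝ := Real.exp (γ * (‖v‖ ^ 2 / 2 + θ)) * (γ * (1 / 2)) * (-(1 / γ)) *
      (Real.exp (γ * (‖v‖ ^ 2 / 2 + θ)) - 1) ^ (-(1 / γ) - 1) with hD
  -- derivative of the scalar function u ↦ (exp (γ (u/2 + θ)) - 1) ^ (-(1/γ)) at ‖v‖²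
  have hF : HasDerivAt (fun u : ℝ => (Real.exp (γ * (u / 2 + θ)) - 1) ^ (-(1 / γ)))
      D (‖v‖ ^ 2) := by
    have h1 : HasDerivAt (fun u : ℝ => γ * (u / 2 + θ)) (γ * (1 / 2)) (‖v‖ ^ 2) := by
      have := (((hasDerivAt_id (‖v‖ ^ 2)).div_const 2).add_const θ).const_mul γ
      simpa using this
    have h2 : HasDerivAt (fun u : ℝ => Real.exp (γ * (u / 2 + θ)) - 1)
        (Real.exp (γ * (‖v‖ ^ 2 / 2 + θ)) * (γ * (1 / 2))) (‖v‖ ^ 2) := (h1.exp).sub_const 1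
    exact h2.rpow_const (Or.inl (ne_of_gt hEpos))
  have hN : HasFDerivAt (fun w : EuclideanSpace ℝ (Fin d) => ‖w‖ ^ 2)
      (2 • (innerSL ℝ v)) v := (hasStrictFDerivAt_norm_sq v).hasFDerivAt
  have hcomp : HasFDerivAt f (D • (2 • (innerSL ℝ v))) v := by
    have := hF.comp_hasFDerivAt v hN
    refine HasFDerivAt.congr_of_eventuallyEq this ?_
    filter_upwards with w
    rw [hf w]
    rfl
  rw [hcomp.fderiv]
  have hinner : (innerSL ℝ v) (EuclideanSpace.single i (1 : ℝ)) = v i := by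
    simp [innerSL_apply_apply, EuclideanSpace.inner_single_right]
  simp only [ContinuousLinearMap.coe_smul', Pi.smul_apply, ContinuousLinearMap.smul_apply,
    hinner, smul_eq_mul, nsmul_eq_mul, Nat.cast_ofNat]
  -- algebraic identity
  have hfv : f v = E ^ (-(1 / γ)) := by rw [hf v]
  have hrpow : f v ^ γ = E ^ (-1 : ℝ) := by
    rw [hfv, ← Real.rpow_mul hEpos.le]
    congr 1
    field_simp
  have hexp : Real.exp (γ * (‖v‖ ^ 2 / 2 + θ)) = E + 1 := by rw [hE, hg]; ring
  rw [hrpow, hfv, hD, hexp, show E + 1 - 1 = E from by ring]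
  rw [show (-(1 / γ) - 1 : ℝ) = -(1 / γ) + (-1) by ring, Real.rpow_add hEpos,
    Real.rpow_neg_one]
  have hEne : E ≠ 0 := ne_of_gt hEpos
  field_simp

theorem stmt_9 (d : ℕ) (hd : 1 ≤ d) (γ θ : ℝ) (hγ : 0 < γ) (hθ : 0 < θ)
    (f : EuclideanSpace ℝ (Fin d) → ℝ)
    (hf : ∀ v, f v = (Real.exp (γ * (‖v‖ ^ 2 / 2 + θ)) - 1) ^ (-(1 / γ))) :
    ∀ v : EuclideanSpace ℝ (Fin d),
      (∑ i : Fin d, fderiv ℝ (fun w => fderiv ℝ f w (EuclideanSpace.single i (1:ℝ))) v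
          (EuclideanSpace.single i (1:ℝ))) +
      (∑ i : Fin d, fderiv ℝ (fun w : EuclideanSpace ℝ (Fin d) =>
          w i * f w * (1 + f w ^ γ)) v (EuclideanSpace.single i (1:ℝ))) = 0 := by
  intro v
  have hkey : ∀ i : Fin d,
      (fun w : EuclideanSpace ℝ (Fin d) => w i * f w * (1 + f w ^ γ)) =
      (fun w => -(fderiv ℝ f w (EuclideanSpace.single i (1:ℝ)))) := by
    intro i
    funext w
    rw [aux_fderiv_f d γ θ hγ hθ f hf w i]
    ring
  have hterm : ∀ i : Fin d,
      fderiv ℝ (fun w : EuclideanSpace ℝ (Fin d) => w i * f w * (1 + f w ^ γ)) v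
        (EuclideanSpace.single i (1:ℝ)) =
      -(fderiv ℝ (fun w => fderiv ℝ f w (EuclideanSpace.single i (1:ℝ))) v
        (EuclideanSpace.single i (1:ℝ))) := by
    intro i
    rw [hkey i, fderiv_fun_neg]
    simp
  rw [Finset.sum_congr rfl fun i _ => hterm i, ← Finset.sum_add_distrib]
  simp
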